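/- Assume the unit η of the adjunction P ⊣ U is an isomorphism. If for every object X of 𝓒 the counit component ε_{Y(X)} : P(F(X)) ⟶ Y(X) is an isomorphism in 𝓟𝓒, then the Freyd functor F : 𝓒 ⥤ 𝓟𝓑 is faithful. -/

import Mathlib

open CategoryTheory Opposite

universe v u

variable (B C : Type u) [Category.{v} B] [Category.{v} C] [Preadditive B] [Preadditive C]

/-- The category of additive presheaves (of abelian groups) on a preadditive category. -/
noncomputable abbrev AddPresheaf (D : Type u) [Category.{v} D] [Preadditive D] :=
  Dᵒᵖ ⥤+ AddCommGrpCat.{v}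

/-- The restriction functor `U : 𝓟𝓒 ⥤ 𝓟𝓑` given by precomposition with `ιᵒᵖ`. -/
noncomputable def restrictU (ι : B ⥤ C) [ι.Additive] :
    AddPresheaf C ⥤ AddPresheaf B where
  obj G := ⟨ι.op ⋙ G.1, letI := G.2; show (ι.op ⋙ G.1).Additive from inferInstance⟩
  map α := ObjectProperty.homMk (Functor.whiskerLeft ι.op α.hom)

/-- The additive Yoneda embedding `Y : 𝓒 ⥤ 𝓟𝓒`, `Y(X) = 𝓒(−, X)`. -/
noncomputable def yonedaAdd : C ⥤ AddPresheaf C where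
  obj X := ⟨preadditiveYoneda.obj X, show (preadditiveYoneda.obj X).Additive from inferInstance⟩
  map f := ObjectProperty.homMk (preadditiveYoneda.map f)

/-- The Freyd functor `F = Y ⋙ U : 𝓒 ⥤ 𝓟𝓑`, `F(X) = 𝓒(ι(−), X)`. -/
noncomputable def freydF (ι : B ⥤ C) [ι.Additive] : C ⥤ AddPresheaf B :=
  yonedaAdd C ⋙ restrictU B C ι

/-- if the unit of `P ⊣ U` is an isomorphism and the counit component
`ε_{Y(X)} : P(F(X)) ⟶ Y(X)` is an isomorphism for all `X` in `𝓒`, then the Freyd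
functor `F : 𝓒 ⥤ 𝓟𝓑` is faithful. -/
theorem freyd_faithful_of_counit_iso (ι : B ⥤ C) [ι.Additive] [ι.Full] [ι.Faithful]
    (P : AddPresheaf B ⥤ AddPresheaf C) (adj : P ⊣ restrictU B C ι)
    (hη : IsIso adj.unit)
    (hε : ∀ X : C, IsIso (adj.counit.app ((yonedaAdd C).obj X))) :
    (freydF B C ι).Faithful := by
  constructor
  intro X X' f g h
  have hY : (yonedaAdd C).map f = (yonedaAdd C).map g := by
    have hnf := adj.counit.naturality ((yonedaAdd C).map f)
    have hng := adj.counit.naturality ((yonedaAdd C).map g)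
    have hPf : ((restrictU B C ι ⋙ P)).map ((yonedaAdd C).map f)
        = ((restrictU B C ι ⋙ P)).map ((yonedaAdd C).map g) := by
      show P.map ((freydF B C ι).map f) = P.map ((freydF B C ι).map g)
      rw [h]
    have := hε X
    rw [hPf, hng] at hnf
    exact ((cancel_epi (adj.counit.app ((yonedaAdd C).obj X))).mp hnf).symm
  exact preadditiveYoneda.map_injective (congrArg (fun φ => φ.hom) hY)
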